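/- Let 𝔸 be a complete normed ring that is also a normed algebra over ℝ (or ℂ), and let A, B ∈ 𝔸. Set C = A*B - B*A. If C commutes with both A and B, then exp(A) * exp(B) = exp(A + B) * exp(C/2). -/

import Mathlib

open NormedSpace

section Aux

variable {𝔸 : Type*} [NormedRing 𝔸] [NormedAlgebra ℝ 𝔸] [CompleteSpace 𝔸]

lemma my_exp_mul_exp_neg (x : 𝔸) : exp x * exp (-x) = 1 := by
  letI : NormedAlgebra ℚ 𝔸 := .restrictScalars ℚ ℝ 𝔸
  rw [← exp_add_of_commute (Commute.neg_right (Commute.refl x)), add_neg_cancel, exp_zero]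

lemma my_exp_neg_mul_exp (x : 𝔸) : exp (-x) * exp x = 1 := by
  letI : NormedAlgebra ℚ 𝔸 := .restrictScalars ℚ ℝ 𝔸
  rw [← exp_add_of_commute (Commute.neg_left (Commute.refl x)), neg_add_cancel, exp_zero]

/-- If the commutator `D = X*Y - Y*X` commutes with `X`, then
`exp (s•X) * Y = (Y + s•D) * exp (s•X)`. -/
lemma conj_exp (X Y D : 𝔸) (hD : X * Y - Y * X = D) (h : Commute D X) (s : ℝ) :
    exp (s • X) * Y = (Y + s • D) * exp (s • X) := by
  set f : ℝ → 𝔸 := fun s => exp (s • X) * Y * exp (s • (-X)) - s • D with hf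
  have hderiv : ∀ u : ℝ, HasDerivAt f 0 u := by
    intro u
    have h1 : HasDerivAt (fun u : ℝ => exp (u • X)) (exp (u • X) * X) u :=
      hasDerivAt_exp_smul_const X u
    have h2 : HasDerivAt (fun u : ℝ => exp (u • (-X))) (-X * exp (u • (-X))) u :=
      hasDerivAt_exp_smul_const' (-X) u
    have h3 : HasDerivAt (fun u : ℝ => u • D) ((1 : ℝ) • D) u :=
      (hasDerivAt_id u).smul_const D
    have H := (((h1.mul_const Y).mul h2).sub h3)
    convert H using 1
    · rfl
    · rfl
    have hcomm : Commute D (exp (u • X)) := ((h.smul_right u).exp_right)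
    have key : exp (u • X) * X * Y + exp (u • X) * Y * (-X) = D * exp (u • X) := by
      have : exp (u • X) * (X * Y - Y * X) = D * exp (u • X) := by
        rw [hD, hcomm.eq]
      calc exp (u • X) * X * Y + exp (u • X) * Y * (-X)
          = exp (u • X) * (X * Y - Y * X) := by noncomm_ring
        _ = D * exp (u • X) := this
    have hinv : exp (u • X) * exp (u • (-X)) = 1 := by
      rw [smul_neg]; exact my_exp_mul_exp_neg _
    calc (0 : 𝔸) = D * (exp (u • X) * exp (u • (-X))) - (1 : ℝ) • D := by
          rw [hinv, mul_one, one_smul, sub_self]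
      _ = (exp (u • X) * X * Y + exp (u • X) * Y * (-X)) * exp (u • (-X)) - (1 : ℝ) • D := by
          rw [key, mul_assoc]
      _ = _ := by noncomm_ring
  have hconst : f s = f 0 :=
    is_const_of_deriv_eq_zero (fun u => (hderiv u).differentiableAt)
      (fun u => (hderiv u).deriv) s 0
  have hf0 : f 0 = Y := by simp [hf, exp_zero]
  have hfs : exp (s • X) * Y * exp (s • (-X)) = Y + s • D :=
    sub_eq_iff_eq_add.mp (hconst.trans hf0)
  have hinv : exp (s • (-X)) * exp (s • X) = 1 := by
    rw [smul_neg]; exact my_exp_neg_mul_exp _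
  calc exp (s • X) * Y
      = exp (s • X) * Y * (exp (s • (-X)) * exp (s • X)) := by rw [hinv, mul_one]
    _ = (exp (s • X) * Y * exp (s • (-X))) * exp (s • X) := by rw [← mul_assoc]
    _ = (Y + s • D) * exp (s • X) := by rw [hfs]

end Aux

theorem stmt1 {𝔸 : Type*} [NormedRing 𝔸] [NormedAlgebra ℝ 𝔸] [CompleteSpace 𝔸]
    (A B : 𝔸) (C : 𝔸) (hC : C = A * B - B * A)
    (hCA : Commute C A) (hCB : Commute C B) :
    NormedSpace.exp A * NormedSpace.exp B =
      NormedSpace.exp (A + B) * NormedSpace.exp ((2 : ℝ)⁻¹ • C) := by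
  have hCAB : Commute C (-(A + B)) := (hCA.add_right hCB).neg_right
  set w : ℝ → 𝔸 := fun t =>
    exp ((-(t ^ 2 / 2)) • C) *
      (exp (t • (-(A + B))) * (exp (t • A) * exp (t • B))) with hw
  have hderiv : ∀ t : ℝ, HasDerivAt w 0 t := by
    intro t
    set E1 := exp ((-(t ^ 2 / 2)) • C) with hE1
    set E2 := exp (t • (-(A + B))) with hE2
    set E3 := exp (t • A) with hE3
    set E4 := exp (t • B) with hE4
    have hu : HasDerivAt (fun t : ℝ => -(t ^ 2 / 2)) (-t) t := by
      have := ((hasDerivAt_pow 2 t).div_const 2).neg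
      convert this using 1
      · rfl
      · rfl
      · rfl
      push_cast
      ring
    have h1 : HasDerivAt (fun t : ℝ => exp ((-(t ^ 2 / 2)) • C)) ((-t) • (C * E1)) t := by
      have := (hasDerivAt_exp_smul_const' C (-(t ^ 2 / 2))).scomp t hu
      simpa only [Function.comp_def] using this
    have h2 : HasDerivAt (fun t : ℝ => exp (t • (-(A + B)))) (-(A + B) * E2) t :=
      hasDerivAt_exp_smul_const' (-(A + B)) t
    have h3 : HasDerivAt (fun t : ℝ => exp (t • A)) (A * E3) t :=
      hasDerivAt_exp_smul_const' A t
    have h4 : HasDerivAt (fun t : ℝ => exp (t • B)) (B * E4) t :=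
      hasDerivAt_exp_smul_const' B t
    have H := h1.mul (h2.mul (h3.mul h4))
    convert H using 1
    · rfl
    simp only [Pi.mul_apply, ← hE1, ← hE2, ← hE3, ← hE4]
    -- commutation facts
    have w2A : E2 * A = A * E2 + t • (C * E2) := by
      rw [hE2, conj_exp (-(A + B)) A C (by rw [hC]; noncomm_ring) hCAB t, add_mul,
        smul_mul_assoc]
    have w2B : E2 * B = B * E2 - t • (C * E2) := by
      rw [hE2, conj_exp (-(A + B)) B (-C) (by rw [hC]; noncomm_ring) hCAB.neg_left t, add_mul,
        smul_mul_assoc]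
      simp [sub_eq_add_neg]
    have w3B : E3 * B = B * E3 + t • (C * E3) := by
      rw [hE3, conj_exp A B C (by rw [hC]) hCA t, add_mul, smul_mul_assoc]
    have c1A : E1 * A = A * E1 := ((hCA.symm.smul_right _).exp_right).symm.eq
    have c1B : E1 * B = B * E1 := ((hCB.symm.smul_right _).exp_right).symm.eq
    have c1C : E1 * C = C * E1 := (((Commute.refl C).smul_right _).exp_right).symm.eq
    have c2C : E2 * C = C * E2 := ((hCAB.smul_right t).exp_right).symm.eq
    have w2A' : ∀ z : 𝔸, E2 * (A * z) = A * (E2 * z) + t • (C * (E2 * z)) := fun z => by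
      rw [← mul_assoc, w2A, add_mul, smul_mul_assoc, mul_assoc, mul_assoc]
    have w2B' : ∀ z : 𝔸, E2 * (B * z) = B * (E2 * z) - t • (C * (E2 * z)) := fun z => by
      rw [← mul_assoc, w2B, sub_mul, smul_mul_assoc, mul_assoc, mul_assoc]
    have w3B' : ∀ z : 𝔸, E3 * (B * z) = B * (E3 * z) + t • (C * (E3 * z)) := fun z => by
      rw [← mul_assoc, w3B, add_mul, smul_mul_assoc, mul_assoc, mul_assoc]
    have c1A' : ∀ z : 𝔸, E1 * (A * z) = A * (E1 * z) := fun z => by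
      rw [← mul_assoc, c1A, mul_assoc]
    have c1B' : ∀ z : 𝔸, E1 * (B * z) = B * (E1 * z) := fun z => by
      rw [← mul_assoc, c1B, mul_assoc]
    have c1C' : ∀ z : 𝔸, E1 * (C * z) = C * (E1 * z) := fun z => by
      rw [← mul_assoc, c1C, mul_assoc]
    have c2C' : ∀ z : 𝔸, E2 * (C * z) = C * (E2 * z) := fun z => by
      rw [← mul_assoc, c2C, mul_assoc]
    simp only [neg_mul, neg_add, mul_add, add_mul, mul_neg, mul_assoc, smul_mul_assoc,
      mul_smul_comm]
    rw [w3B']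
    simp only [mul_add, mul_smul_comm]
    rw [w2A', w2B', c2C']
    simp only [mul_add, mul_sub, mul_smul_comm]
    rw [c1A', c1B', c1C']
    simp only [neg_smul, smul_sub]
    abel
  have hconst : w 1 = w 0 :=
    is_const_of_deriv_eq_zero (fun u => (hderiv u).differentiableAt)
      (fun u => (hderiv u).deriv) 1 0
  have hw0 : w 0 = 1 := by
    simp [hw, exp_zero]
  have hw1 : exp ((-(2:ℝ)⁻¹) • C) *
      (exp (-(A + B)) * (exp A * exp B)) = 1 := by
    have := hconst.trans hw0
    rw [hw] at this
    simpa [one_smul] using this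
  have step : exp (-(A + B)) * (exp A * exp B) = exp ((2:ℝ)⁻¹ • C) := by
    have := congrArg (fun x => exp ((2:ℝ)⁻¹ • C) * x) hw1
    simp only [mul_one] at this
    rw [← mul_assoc] at this
    have hcancel : exp ((2:ℝ)⁻¹ • C) * exp ((-(2:ℝ)⁻¹) • C) = 1 := by
      rw [neg_smul]
      exact my_exp_mul_exp_neg _
    rw [hcancel, one_mul] at this
    exact this
  calc exp A * exp B
      = (exp (A + B) * exp (-(A + B))) * (exp A * exp B) := by
        rw [my_exp_mul_exp_neg, one_mul]
    _ = exp (A + B) * (exp (-(A + B)) * (exp A * exp B)) := by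
        rw [mul_assoc]
    _ = exp (A + B) * exp ((2:ℝ)⁻¹ • C) := by rw [step]
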